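/- Let p be a prime with p ≡ 1 (mod 4), Q ⊂ GF(p)^× the set of quadratic residues and N the set of non-residues, and let S ⊊ GF(p) be a subset with |S| odd (so S^c = GF(p)∖S is non-empty). Then the Hamming weight of the codeword c = (r_N r_S, r_Q r_S) of the QQR code C_NQ satisfies wt(c) = p − Σ_{a∈GF(p)} χ(f_{S^c}(a)) = 2p + 2 − |X_{S^c}(GF(p))|. -/

import Mathlib

open Finset

/-- `r_S = Σ_{i∈S} x^i`, viewed as an element of `R = GF(2)[x]/(x^p-1)`
(identified with functions `ZMod p → ZMod 2` recording coefficients). -/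
def rOf {p : ℕ} (S : Finset (ZMod p)) : ZMod p → ZMod 2 :=
  fun a => if a ∈ S then 1 else 0

/-- Multiplication in `R = GF(2)[x]/(x^p-1)` (cyclic convolution of coefficients). -/
def conv {p : ℕ} [NeZero p] (f g : ZMod p → ZMod 2) : ZMod p → ZMod 2 :=
  fun a => ∑ b : ZMod p, f b * g (a - b)

/-- Hamming weight of an element of `R`. -/
def wt {p : ℕ} [NeZero p] (f : ZMod p → ZMod 2) : ℕ :=
  (Finset.univ.filter fun a => f a ≠ 0).card

/-- The set `Q` of quadratic residues in `GF(p)ˣ`. -/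
def Qset (p : ℕ) [NeZero p] : Finset (ZMod p) :=
  Finset.univ.filter fun a => a ≠ 0 ∧ ∃ b : ZMod p, b ^ 2 = a

/-- The set `N` of quadratic non-residues in `GF(p)ˣ`. -/
def Nset (p : ℕ) [NeZero p] : Finset (ZMod p) :=
  Finset.univ.filter fun a => a ≠ 0 ∧ ¬∃ b : ZMod p, b ^ 2 = a

/-- The character sum `Σ_{a ∈ GF(p)} χ(f_S(a))` where `f_S(x) = Π_{b∈S}(x-b)` and
`χ` is the Legendre character. -/
def charSum (p : ℕ) [Fact p.Prime] (S : Finset (ZMod p)) : ℤ :=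
  ∑ a : ZMod p, quadraticChar (ZMod p) (∏ b ∈ S, (a - b))

/-- `|X_S(GF(p))|`: the number of affine points of `y² = f_S(x)` over `GF(p)`,
plus `2` points at infinity if `|S|` is even and `1` if `|S|` is odd. -/
noncomputable def Xcard (p : ℕ) (S : Finset (ZMod p)) : ℕ :=
  Nat.card {xy : ZMod p × ZMod p // xy.2 ^ 2 = ∏ b ∈ S, (xy.1 - b)} +
    if Even S.card then 2 else 1

/-- The QQR codeword `(r_N r_S, r_Q r_S)`. -/
def qqr (p : ℕ) [NeZero p] (S : Finset (ZMod p)) :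
    (ZMod p → ZMod 2) × (ZMod p → ZMod 2) :=
  (conv (rOf (Nset p)) (rOf S), conv (rOf (Qset p)) (rOf S))

/-- Hamming weight of a length-`2p` vector identified with a pair of elements of `R`. -/
def wt2 {p : ℕ} [NeZero p] (x : (ZMod p → ZMod 2) × (ZMod p → ZMod 2)) : ℕ :=
  wt x.1 + wt x.2

/-- The LQR codeword `c_S = (r_N r_S, r_Q r_S, r_N r_S*, r_Q r_S*)`. -/
def lqr (p : ℕ) [NeZero p] (S : Finset (ZMod p)) :
    ((ZMod p → ZMod 2) × (ZMod p → ZMod 2)) × ((ZMod p → ZMod 2) × (ZMod p → ZMod 2)) :=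
  (qqr p S, qqr p Sᶜ)

/-- Hamming weight of a length-`4p` vector identified with a 4-tuple of elements of `R`. -/
def wt4 {p : ℕ} [NeZero p]
    (x : ((ZMod p → ZMod 2) × (ZMod p → ZMod 2)) × ((ZMod p → ZMod 2) × (ZMod p → ZMod 2))) : ℕ :=
  wt2 x.1 + wt2 x.2


section Aux
variable {p : ℕ} [Fact p.Prime]

lemma natCast_zmod_two_ne_zero_iff_odd (n : ℕ) : ((n : ZMod 2) ≠ 0) ↔ Odd n := by
  rw [Ne, ZMod.natCast_eq_zero_iff, Nat.odd_iff, Nat.dvd_iff_mod_eq_zero]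
  omega

lemma mem_Nset_iff {x : ZMod p} : x ∈ Nset p ↔ x ≠ 0 ∧ ¬ IsSquare x := by
  simp only [Nset, mem_filter, mem_univ, true_and]
  constructor <;> rintro ⟨h1, h2⟩ <;> refine ⟨h1, ?_⟩
  · rintro ⟨r, hr⟩; exact h2 ⟨r, by rw [hr, sq]⟩
  · rintro ⟨b, hb⟩; exact h2 ⟨b, by rw [← hb, sq]⟩

lemma chi_eval (_hp2 : p ≠ 2) {x : ZMod p} (hx : x ≠ 0) :
    (quadraticChar (ZMod p) x : ℤ) = if x ∈ Nset p then -1 else 1 := by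
  by_cases h : IsSquare x
  · rw [if_neg (fun hm => (mem_Nset_iff.mp hm).2 h), (quadraticChar_one_iff_isSquare hx).mpr h]
  · rw [if_pos (mem_Nset_iff.mpr ⟨hx, h⟩), quadraticChar_neg_one_iff_not_isSquare.mpr h]

lemma conv_rOf_apply (T S : Finset (ZMod p)) (a : ZMod p) :
    conv (rOf T) (rOf S) a = (((S.filter fun c => a - c ∈ T)).card : ZMod 2) := by
  have h1 : conv (rOf T) (rOf S) a
      = (((univ : Finset (ZMod p)).filter fun b => b ∈ T ∧ a - b ∈ S).card : ZMod 2) := by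
    unfold conv rOf
    rw [Finset.card_filter]
    push_cast
    refine Finset.sum_congr rfl fun b _ => ?_
    by_cases hb : b ∈ T <;> by_cases hs : a - b ∈ S <;> simp [hb, hs]
  rw [h1]
  congr 1
  refine Finset.card_nbij' (i := fun b => a - b) (j := fun c => a - c) ?_ ?_ ?_ ?_
  · intro b hb
    simp only [mem_coe, mem_filter, mem_univ, true_and] at hb
    rw [mem_coe, mem_filter]
    exact ⟨hb.2, by rw [sub_sub_cancel]; exact hb.1⟩
  · intro c hc
    simp only [mem_coe, mem_filter] at hc
    simp only [mem_coe, mem_filter, mem_univ, true_and]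
    exact ⟨hc.2, by rw [sub_sub_cancel]; exact hc.1⟩
  · intro b _; simp [sub_sub_cancel]
  · intro c _; simp [sub_sub_cancel]

lemma wt_conv (T S : Finset (ZMod p)) :
    wt (conv (rOf T) (rOf S))
      = ((univ : Finset (ZMod p)).filter fun a =>
          Odd (S.filter fun c => a - c ∈ T).card).card := by
  unfold wt
  congr 1
  refine Finset.filter_congr fun a _ => ?_
  rw [conv_rOf_apply, natCast_zmod_two_ne_zero_iff_odd]

lemma NA_add_QA (S : Finset (ZMod p)) (a : ZMod p) :
    (S.filter fun c => a - c ∈ Nset p).card + (S.filter fun c => a - c ∈ Qset p).card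
      = (S.erase a).card := by
  have h0 : ∀ x : ZMod p, x ≠ 0 → (x ∈ Qset p ↔ ¬ x ∈ Nset p) := by
    intro x hx
    simp only [Qset, Nset, mem_filter, mem_univ, true_and, ne_eq, hx, not_false_eq_true,
      true_and, not_not]
  have hmm : ∀ (T : Finset (ZMod p)), (0 : ZMod p) ∉ T →
      S.filter (fun c => a - c ∈ T) = (S.erase a).filter (fun c => a - c ∈ T) := by
    intro T h0T
    ext c
    simp only [mem_filter, mem_erase, ne_eq]
    constructor
    · rintro ⟨hcS, hcT⟩
      refine ⟨⟨?_, hcS⟩, hcT⟩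
      rintro rfl; rw [sub_self] at hcT; exact h0T hcT
    · rintro ⟨⟨-, hcS⟩, hcT⟩; exact ⟨hcS, hcT⟩
  rw [hmm _ (by simp [Nset]), hmm _ (by simp [Qset])]
  have hdisj : Disjoint ((S.erase a).filter (fun c => a - c ∈ Nset p))
      ((S.erase a).filter (fun c => a - c ∈ Qset p)) := by
    rw [Finset.disjoint_left]
    intro c hc1 hc2
    rw [mem_filter] at hc1 hc2
    have hne : a - c ≠ 0 := sub_ne_zero.mpr (Ne.symm (Finset.mem_erase.mp hc1.1).1)
    exact (h0 _ hne).mp hc2.2 hc1.2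
  rw [← Finset.card_union_of_disjoint hdisj]
  congr 1
  ext c
  simp only [mem_union, mem_filter, mem_erase, ne_eq]
  constructor
  · rintro (⟨h1, -⟩ | ⟨h1, -⟩) <;> exact h1
  · intro h1
    have hne : a - c ≠ 0 := sub_ne_zero.mpr (Ne.symm h1.1)
    by_cases hN : a - c ∈ Nset p
    · exact Or.inl ⟨h1, hN⟩
    · exact Or.inr ⟨h1, ((h0 _ hne).mpr hN)⟩

lemma prod_chi_erase (hp4 : p % 4 = 1) (a : ZMod p) :
    ∏ b ∈ (univ : Finset (ZMod p)).erase a, (quadraticChar (ZMod p) (a - b)) = 1 := by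
  have h2 : ∏ u : (ZMod p)ˣ, (quadraticChar (ZMod p) ((u : ZMod p)))
      = ∏ b ∈ (univ : Finset (ZMod p)).erase a, (quadraticChar (ZMod p) (a - b)) := by
    refine Finset.prod_bij (fun u _ => a - (u : ZMod p)) ?_ ?_ ?_ ?_
    · intro u _
      simp only [mem_erase, mem_univ, and_true, ne_eq, sub_eq_self]
      exact u.ne_zero
    · intro u₁ _ u₂ _ h
      exact Units.ext (sub_right_inj.mp h)
    · intro b hb
      have hab : a - b ≠ 0 := sub_ne_zero.mpr (Ne.symm (Finset.mem_erase.mp hb).1)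
      exact ⟨Units.mk0 _ hab, Finset.mem_univ _, by simp⟩
    · intro u _
      rw [sub_sub_cancel]
  rw [← h2, ← map_prod]
  have h3 : (∏ u : (ZMod p)ˣ, (u : ZMod p)) = -1 := by
    have hm := map_prod (Units.coeHom (ZMod p)) (fun u => u) (univ : Finset (ZMod p)ˣ)
    simp only [Units.coeHom_apply] at hm
    rw [← hm, FiniteField.prod_univ_units_id_eq_neg_one]
    simp
  rw [h3]
  have hsq : IsSquare (-1 : ZMod p) := ZMod.exists_sq_eq_neg_one_iff.mpr (by omega)
  exact (quadraticChar_one_iff_isSquare (neg_ne_zero.mpr one_ne_zero)).mpr hsq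

lemma chi_prod_compl (hp4 : p % 4 = 1) (S : Finset (ZMod p)) {a : ZMod p} (ha : a ∈ S) :
    (quadraticChar (ZMod p) (∏ b ∈ Sᶜ, (a - b)) : ℤ)
      = (-1) ^ (S.filter fun c => a - c ∈ Nset p).card := by
  have hp2 : p ≠ 2 := by omega
  have hdisj : Disjoint (S.erase a) Sᶜ :=
    (disjoint_compl_right).mono_left (Finset.erase_subset _ _)
  have hsplit : (S.erase a) ∪ Sᶜ = (univ : Finset (ZMod p)).erase a := by
    ext c
    simp only [mem_union, mem_erase, mem_compl, mem_univ, and_true, ne_eq]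
    constructor
    · rintro (⟨h1, -⟩ | h1)
      · exact h1
      · rintro rfl; exact h1 ha
    · intro h1
      by_cases hc : c ∈ S
      · exact Or.inl ⟨h1, hc⟩
      · exact Or.inr hc
  have hu := Finset.prod_union hdisj (f := fun b => (quadraticChar (ZMod p) (a - b) : ℤ))
  rw [hsplit, prod_chi_erase hp4 a] at hu
  have h1 : ∏ b ∈ S.erase a, (quadraticChar (ZMod p) (a - b) : ℤ)
      = (-1) ^ (S.filter fun c => a - c ∈ Nset p).card := by
    have hc : ∀ b ∈ S.erase a, (quadraticChar (ZMod p) (a - b) : ℤ)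
        = if a - b ∈ Nset p then -1 else 1 := fun b hb =>
      chi_eval hp2 (sub_ne_zero.mpr (Ne.symm (Finset.mem_erase.mp hb).1))
    rw [Finset.prod_congr rfl hc, Finset.prod_ite, Finset.prod_const, Finset.prod_const,
      one_pow, mul_one]
    congr 2
    ext c
    simp only [mem_filter, mem_erase, ne_eq]
    constructor
    · rintro ⟨⟨-, h2⟩, h3⟩; exact ⟨h2, h3⟩
    · rintro ⟨h2, h3⟩
      refine ⟨⟨?_, h2⟩, h3⟩
      rintro rfl
      rw [sub_self] at h3
      simp [Nset] at h3
  rw [map_prod]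
  rw [h1] at hu
  set n := (S.filter fun c => a - c ∈ Nset p).card with hn
  have hsq : ((-1:ℤ)^n) * ((-1:ℤ)^n) = 1 := by
    rw [← pow_add]; exact Even.neg_one_pow ⟨n, rfl⟩
  calc ∏ b ∈ Sᶜ, (quadraticChar (ZMod p) (a - b) : ℤ)
      = (((-1:ℤ)^n) * ((-1:ℤ)^n)) * ∏ b ∈ Sᶜ, (quadraticChar (ZMod p) (a - b) : ℤ) := by
        rw [hsq, one_mul]
    _ = ((-1:ℤ)^n) * (((-1:ℤ)^n) * ∏ b ∈ Sᶜ, (quadraticChar (ZMod p) (a - b) : ℤ)) := by ring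
    _ = (-1:ℤ)^n := by rw [← hu, mul_one]

lemma charSum_compl (hp4 : p % 4 = 1) (S : Finset (ZMod p)) :
    charSum p Sᶜ = ∑ a ∈ S, (-1:ℤ) ^ (S.filter fun c => a - c ∈ Nset p).card := by
  unfold charSum
  rw [← Finset.sum_add_sum_compl S]
  have h0 : ∑ a ∈ Sᶜ, (quadraticChar (ZMod p) (∏ b ∈ Sᶜ, (a - b)) : ℤ) = 0 :=
    Finset.sum_eq_zero fun a ha => by
      rw [Finset.prod_eq_zero ha (sub_self a)]
      exact quadraticChar_zero
  rw [h0, add_zero]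
  exact Finset.sum_congr rfl fun a ha => chi_prod_compl hp4 S ha

end Aux

/-- Weight of a QQR codeword for `|S|` odd and `p ≡ 1 (mod 4)`. -/
theorem qqr_weight_odd_one_mod_four (p : ℕ) [Fact p.Prime] (hp4 : p % 4 = 1)
    (S : Finset (ZMod p)) (hS : S ≠ Finset.univ) (hodd : Odd S.card) :
    (wt2 (qqr p S) : ℤ) = (p : ℤ) - charSum p Sᶜ ∧
    (wt2 (qqr p S) : ℤ) = 2 * (p : ℤ) + 2 - (Xcard p Sᶜ : ℤ) := by
  classical
  have hp2 : p ≠ 2 := by omega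
  have hcard : Fintype.card (ZMod p) = p := ZMod.card p
  have hSle : S.card ≤ p := le_of_le_of_eq (Finset.card_le_univ S) hcard
  have hw : wt2 (qqr p S)
      = ((univ : Finset (ZMod p)).filter fun a =>
          Odd (S.filter fun c => a - c ∈ Nset p).card).card
        + ((univ : Finset (ZMod p)).filter fun a =>
          Odd (S.filter fun c => a - c ∈ Qset p).card).card := by
    show wt (conv (rOf (Nset p)) (rOf S)) + wt (conv (rOf (Qset p)) (rOf S)) = _
    rw [wt_conv, wt_conv]
  have split : ∀ (P : ZMod p → Prop) (_ : DecidablePred P),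
      ((univ : Finset (ZMod p)).filter P).card
        = (S.filter P).card + (Sᶜ.filter P).card := by
    intro P _
    rw [← Finset.card_union_of_disjoint (Finset.disjoint_filter_filter disjoint_compl_right),
      ← Finset.filter_union, Finset.union_compl]
  have hQ_eq_on_S : S.filter (fun a => Odd (S.filter fun c => a - c ∈ Qset p).card)
      = S.filter (fun a => Odd (S.filter fun c => a - c ∈ Nset p).card) := by
    refine Finset.filter_congr fun a ha => ?_
    have h := NA_add_QA S a
    rw [Finset.card_erase_of_mem ha] at h
    have h1 : 1 ≤ S.card := Finset.card_pos.mpr ⟨a, ha⟩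
    rw [Nat.odd_iff] at hodd
    rw [Nat.odd_iff, Nat.odd_iff]
    omega
  have hQN_on_Sc : (Sᶜ.filter (fun a => Odd (S.filter fun c => a - c ∈ Qset p).card)).card
      + (Sᶜ.filter (fun a => Odd (S.filter fun c => a - c ∈ Nset p).card)).card
      = Sᶜ.card := by
    have he : Sᶜ.filter (fun a => Odd (S.filter fun c => a - c ∈ Qset p).card)
        = Sᶜ.filter (fun a => ¬ Odd (S.filter fun c => a - c ∈ Nset p).card) := by
      refine Finset.filter_congr fun a ha => ?_
      have h := NA_add_QA S a
      rw [Finset.erase_eq_of_notMem (Finset.mem_compl.mp ha)] at h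
      rw [Nat.odd_iff] at hodd
      rw [Nat.odd_iff, Nat.odd_iff]
      omega
    rw [he, add_comm]
    exact Finset.card_filter_add_card_filter_not _
  have hcs : charSum p Sᶜ
      = (S.card : ℤ)
        - 2 * (S.filter (fun a => Odd (S.filter fun c => a - c ∈ Nset p).card)).card := by
    rw [charSum_compl hp4 S]
    have hco : ∀ a ∈ S, (-1:ℤ) ^ (S.filter fun c => a - c ∈ Nset p).card
        = if Odd (S.filter fun c => a - c ∈ Nset p).card then -1 else 1 := by
      intro a _
      by_cases h : Odd (S.filter fun c => a - c ∈ Nset p).card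
      · rw [if_pos h, Odd.neg_one_pow h]
      · rw [if_neg h, Even.neg_one_pow (Nat.not_odd_iff_even.mp h)]
    rw [Finset.sum_congr rfl hco, Finset.sum_ite, Finset.sum_const, Finset.sum_const]
    have hkk := Finset.card_filter_add_card_filter_not
      (s := S) (p := fun a => Odd (S.filter fun c => a - c ∈ Nset p).card)
    rw [nsmul_eq_mul, nsmul_eq_mul, mul_one, mul_neg_one]
    omega
  have hwt : wt2 (qqr p S) + S.card
      = 2 * (S.filter (fun a => Odd (S.filter fun c => a - c ∈ Nset p).card)).card + p := by
    rw [hw, split _ inferInstance, split _ inferInstance, hQ_eq_on_S]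
    have h2 : Sᶜ.card = p - S.card := by rw [Finset.card_compl, hcard]
    omega
  have hfirst : (wt2 (qqr p S) : ℤ) = (p : ℤ) - charSum p Sᶜ := by
    rw [hcs]
    omega
  refine ⟨hfirst, ?_⟩
  have hcard_sqrt : ∀ c : ZMod p, ((Fintype.card {y : ZMod p // y ^ 2 = c} : ℕ) : ℤ)
      = quadraticChar (ZMod p) c + 1 := by
    intro c
    rw [← quadraticChar_card_sqrts (by rw [ZMod.ringChar_zmod_n]; exact hp2) c]
    congr 1
    rw [Set.toFinset_card]
    exact Fintype.card_congr (Equiv.refl _)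
  have hX : (Xcard p Sᶜ : ℤ) = (p : ℤ) + charSum p Sᶜ + 2 := by
    have heven : Even Sᶜ.card := by
      rw [Finset.card_compl, hcard, Nat.even_iff]
      rw [Nat.odd_iff] at hodd
      omega
    unfold Xcard
    rw [if_pos heven]
    have hnc : (Nat.card {xy : ZMod p × ZMod p // xy.2 ^ 2 = ∏ b ∈ Sᶜ, (xy.1 - b)} : ℤ)
        = (p : ℤ) + charSum p Sᶜ := by
      rw [Nat.card_eq_fintype_card,
        Fintype.card_congr (Equiv.subtypeProdEquivSigmaSubtype
          (fun (x y : ZMod p) => y ^ 2 = ∏ b ∈ Sᶜ, (x - b))),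
        Fintype.card_sigma]
      push_cast
      rw [Finset.sum_congr rfl (fun x _ => hcard_sqrt (∏ b ∈ Sᶜ, (x - b))),
        Finset.sum_add_distrib, Finset.sum_const, Finset.card_univ, hcard]
      unfold charSum
      push_cast
      ring
    push_cast
    rw [hnc]
  rw [hfirst, hX]
  ring
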